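/- The digraph D constructed from any 3-Dimensional Matching instance (X^α, X^β, X^γ, E) is a directed acyclic graph, and the deletion of the twelve vertices α_1, α_2, α_3, β_1, β_2, β_3, γ_1, γ_2, γ_3, a, b, c from its underlying undirected graph leaves a graph with no cycle (so the underlying undirected graph of D has feedback vertex set number at most 12). -/

import Mathlib

namespace GeoPaper

variable {V : Type*}

/-- A directed walk from `u` to `v` in the digraph with arc relation `D`,
represented by the list of its vertices. -/
def IsWalk (D : V → V → Prop) (u v : V) (p : List V) : Prop :=
  p.Chain' D ∧ p.head? = some u ∧ p.getLast? = some v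

/-- `interval D u v` is the set of vertices lying on some shortest directed
path from `u` to `v` (i.e. a directed walk of minimum length from `u` to `v`). -/
def interval (D : V → V → Prop) (u v : V) : Set V :=
  {x | ∃ p, IsWalk D u v p ∧ (∀ q, IsWalk D u v q → p.length ≤ q.length) ∧ x ∈ p}

/-- `S` is a geodetic set of the digraph `D`: every vertex lies on a shortest
directed path between two vertices of `S`. -/
def IsGeodetic (D : V → V → Prop) (S : Set V) : Prop :=
  ∀ x, ∃ u ∈ S, ∃ v ∈ S, x ∈ interval D u v

/-- `S` is a geodetic set of minimum cardinality. -/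
def IsMinGeodetic (D : V → V → Prop) (S : Set V) : Prop :=
  IsGeodetic D S ∧ ∀ T : Set V, IsGeodetic D T → S.ncard ≤ T.ncard

/-- a source: no incoming arcs. -/
def IsSource (D : V → V → Prop) (v : V) : Prop := ∀ u, ¬ D u v

/-- a sink: no outgoing arcs. -/
def IsSink (D : V → V → Prop) (v : V) : Prop := ∀ u, ¬ D v u

/-- an extremal vertex: a source or a sink. -/
def Extremal (D : V → V → Prop) (v : V) : Prop := IsSource D v ∨ IsSink D v

/-- the digraph `D` has no directed 2-cycle (an oriented graph). -/
def NoTwoCycle (D : V → V → Prop) : Prop := ∀ u v, D u v → ¬ D v u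

/-- the underlying undirected simple graph of a digraph. -/
def underlying (D : V → V → Prop) : SimpleGraph V where
  Adj u v := u ≠ v ∧ (D u v ∨ D v u)
  symm := ⟨by intro u v h; exact ⟨h.1.symm, h.2.symm⟩⟩
  loopless := ⟨by intro v h; exact h.1 rfl⟩

/-- a leaf: a vertex of degree 1 in the underlying undirected graph. -/
def IsLeaf (D : V → V → Prop) (v : V) : Prop := ((underlying D).neighborSet v).ncard = 1

/-- a ditree: a digraph whose underlying undirected graph is a tree. -/
def IsDitree (D : V → V → Prop) : Prop := (∀ v, ¬ D v v) ∧ (underlying D).IsTree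

/-- reachability by directed paths. -/
def Reach (D : V → V → Prop) : V → V → Prop := Relation.ReflTransGen D

/-- `S` is a maximal strongly connected component of `D`. -/
def IsSCC (D : V → V → Prop) (S : Set V) : Prop :=
  S.Nonempty ∧ (∀ u ∈ S, ∀ v ∈ S, Reach D u v) ∧
    ∀ T : Set V, S ⊆ T → (∀ u ∈ T, ∀ v ∈ T, Reach D u v) → T ⊆ S

/-- a source set: a maximal strongly connected component no arc enters from outside. -/
def IsSourceSet (D : V → V → Prop) (S : Set V) : Prop :=
  IsSCC D S ∧ ∀ u v, v ∈ S → D u v → u ∈ S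

/-- a sink set: a maximal strongly connected component no arc leaves. -/
def IsSinkSet (D : V → V → Prop) (S : Set V) : Prop :=
  IsSCC D S ∧ ∀ u v, u ∈ S → D u v → v ∈ S

/-- a transitive vertex. -/
def IsTransitiveVertex (D : V → V → Prop) (v : V) : Prop :=
  ∀ u1 u2, D u1 v → D v u2 → D u1 u2 ∨ u1 = u2




variable {V : Type*}

/-- degree of `v` inside the vertex subset `W` of the graph `G`. -/
noncomputable def degIn (G : SimpleGraph V) (W : Set V) (v : V) : ℕ := {u | u ∈ W ∧ G.Adj v u}.ncard

/-- one round of pruning: delete all vertices of degree exactly 1. -/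
def pruneStep (G : SimpleGraph V) (W : Set V) : Set V := {v | v ∈ W ∧ degIn G W v ≠ 1}

/-- the vertex set of the base graph of `G`, obtained by iteratively deleting
degree-1 vertices until none remain. -/
def baseSet (G : SimpleGraph V) : Set V := ⋂ k, (pruneStep G)^[k] Set.univ

/-- a core vertex: a vertex of degree at least 3 in the base graph. -/
def IsCoreVertex (G : SimpleGraph V) (v : V) : Prop :=
  v ∈ baseSet G ∧ 3 ≤ degIn G (baseSet G) v

/-- the inner vertices of a path represented as a list of its vertices. -/
def innerList (p : List V) : List V := (p.drop 1).dropLast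

/-- a core path of the base graph of `G`: a path between two core vertices all
of whose internal vertices have degree 2 in the base graph (the two endpoints
may coincide, in which case the core path is a core cycle). -/
def IsCorePath (G : SimpleGraph V) (p : List V) : Prop :=
  ∃ a q b, p = a :: (q ++ [b]) ∧
    p.Chain' G.Adj ∧
    (∀ v ∈ p, v ∈ baseSet G) ∧
    IsCoreVertex G a ∧ IsCoreVertex G b ∧
    q.Nodup ∧ (∀ v ∈ q, v ≠ a ∧ v ≠ b ∧ degIn G (baseSet G) v = 2) ∧
    (a = b → 4 ≤ p.length) ∧ (a ≠ b → p.Nodup)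

/-- the feedback edge set number: the minimum number of edges whose deletion
yields a forest. -/
noncomputable def fen (G : SimpleGraph V) : ℕ :=
  sInf {k | ∃ F : Set (Sym2 V), F ⊆ G.edgeSet ∧ F.ncard = k ∧ (G.deleteEdges F).IsAcyclic}

/-- the feedback vertex set number: the minimum number of vertices whose
deletion yields a forest. -/
noncomputable def fvn (G : SimpleGraph V) : ℕ :=
  sInf {k | ∃ W : Set V, W.ncard = k ∧ (G.induce Wᶜ).IsAcyclic}




/-! ### The reduction from 3-Dimensional Matching

A 3DM instance consists of three disjoint sets `Xᵅ, Xᵝ, Xᵞ`, each identified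
with `Fin n` (the element `x_l^δ` corresponding to `l : Fin n`), and an
injective family `E : Fin m → Fin n × Fin n × Fin n` of `m` triples. -/

/-- the value `λ = n + 1` used in the construction. -/
def lamN (n : ℕ) : ℕ := n + 1

/-- an element `l : Fin n` stands for the element numbered `l + 1` in `1, …, n`. -/
def idx1 {n : ℕ} (l : Fin n) : ℕ := (l : ℕ) + 1

/-- the `δ`-component of a triple, for `δ : Fin 3` (`0 = α`, `1 = β`, `2 = γ`). -/
def tcomp {n : ℕ} (t : Fin n × Fin n × Fin n) (δ : Fin 3) : Fin n :=
  if δ = 0 then t.1 else if δ = 1 then t.2.1 else t.2.2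

/-- a set `S` of `n` triples of `E` covering every element of `U`. -/
def Is3DMSolution (n m : ℕ) (E : Fin m → Fin n × Fin n × Fin n)
    (S : Finset (Fin m)) : Prop :=
  S.card = n ∧ ∀ (δ : Fin 3) (l : Fin n), ∃ e ∈ S, tcomp (E e) δ = l

/-- length of the path from a copy `u_e` of the triple `t = E e` to the vertex `δ_{s+1}`:
`λ² - iλ`, `λ²`, `λ² + iλ` for `s = 0, 1, 2` respectively, where `i = idx1 (tcomp t δ)`. -/
def lenA (n : ℕ) (t : Fin n × Fin n × Fin n) (δ s : Fin 3) : ℕ :=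
  if s = 0 then lamN n ^ 2 - idx1 (tcomp t δ) * lamN n
  else if s = 1 then lamN n ^ 2
  else lamN n ^ 2 + idx1 (tcomp t δ) * lamN n

/-- length of the path from the vertex `δ_{s+1}` to `w_l^δ`:
`λ² + lλ`, `λ²`, `λ² - lλ` for `s = 0, 1, 2` respectively. -/
def lenB (n : ℕ) (s : Fin 3) (l : Fin n) : ℕ :=
  if s = 0 then lamN n ^ 2 + idx1 l * lamN n
  else if s = 1 then lamN n ^ 2
  else lamN n ^ 2 - idx1 l * lamN n

/-- The vertices of the digraph `D` constructed from the 3DM instance. -/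
inductive RV (n m : ℕ) (E : Fin m → Fin n × Fin n × Fin n) : Type
  /-- `u_i^e`: the copy of the triple `e` in the set `M_i` -/
  | edgeV (i : Fin n) (e : Fin m)
  /-- the vertex `d_i` -/
  | dV (i : Fin n)
  | a
  | b
  | c
  /-- the element vertex `v_l^δ` -/
  | vV (δ : Fin 3) (l : Fin n)
  /-- the element vertex `w_l^δ` -/
  | wV (δ : Fin 3) (l : Fin n)
  /-- the element vertex `t_l^δ` -/
  | tV (δ : Fin 3) (l : Fin n)
  /-- the vertex `δ_{s+1}` for `δ ∈ {α, β, γ}` and `s ∈ Fin 3` -/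
  | deltaV (δ : Fin 3) (s : Fin 3)
  /-- the pendant out-neighbor of `δ_{s+1}` -/
  | deltaPend (δ : Fin 3) (s : Fin 3)
  /-- the pendant out-neighbor of the vertex immediately preceding `δ_{s+1}`
  on the path from `u_i^e` to `δ_{s+1}` -/
  | pendA (i : Fin n) (e : Fin m) (δ : Fin 3) (s : Fin 3)
  /-- the internal vertices of the path from `u_i^e` to `δ_{s+1}` -/
  | innA (i : Fin n) (e : Fin m) (δ : Fin 3) (s : Fin 3)
      (j : Fin (lenA n (E e) δ s - 1))
  /-- the internal vertices of the path from `δ_{s+1}` to `w_l^δ` -/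
  | innB (δ : Fin 3) (s : Fin 3) (l : Fin n) (j : Fin (lenB n s l - 1))
  /-- the internal vertices of the path from `δ_2` to `t_l^δ` -/
  | innT (δ : Fin 3) (l : Fin n) (j : Fin (lamN n ^ 2 - 1))

variable {n m : ℕ} {E : Fin m → Fin n × Fin n × Fin n}

/-- the `j`-th vertex (for `0 ≤ j ≤ lenA`) on the path from `u_i^e` to `δ_{s+1}`. -/
def pA (i : Fin n) (e : Fin m) (δ s : Fin 3) (j : ℕ) : RV n m E :=
  if h0 : j = 0 then .edgeV i e
  else if h : j < lenA n (E e) δ s then .innA i e δ s ⟨j - 1, by omega⟩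
  else .deltaV δ s

/-- the `j`-th vertex (for `0 ≤ j ≤ lenB`) on the path from `δ_{s+1}` to `w_l^δ`. -/
def pB (δ s : Fin 3) (l : Fin n) (j : ℕ) : RV n m E :=
  if h0 : j = 0 then .deltaV δ s
  else if h : j < lenB n s l then .innB δ s l ⟨j - 1, by omega⟩
  else .wV δ l

/-- the `j`-th vertex (for `0 ≤ j ≤ λ²`) on the path from `δ_2` to `t_l^δ`. -/
def pT (δ : Fin 3) (l : Fin n) (j : ℕ) : RV n m E :=
  if h0 : j = 0 then .deltaV δ 1
  else if h : j < lamN n ^ 2 then .innT δ l ⟨j - 1, by omega⟩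
  else .tV δ l

/-- The arcs of the digraph `D` constructed from the 3DM instance. -/
inductive RAdj (n m : ℕ) (E : Fin m → Fin n × Fin n × Fin n) :
    RV n m E → RV n m E → Prop
  /-- arcs from every vertex of `M_i` to `d_i` -/
  | edge_d (i : Fin n) (e : Fin m) : RAdj n m E (.edgeV i e) (.dV i)
  /-- arcs from `a` to every vertex of every `M_i` -/
  | a_edge (i : Fin n) (e : Fin m) : RAdj n m E .a (.edgeV i e)
  /-- arcs from every vertex of every `M_i` to `b` -/
  | edge_b (i : Fin n) (e : Fin m) : RAdj n m E (.edgeV i e) .b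
  /-- arcs from each `d_i` to `c` -/
  | d_c (i : Fin n) : RAdj n m E (.dV i) .c
  /-- the arc from `a` to `c` -/
  | a_c : RAdj n m E .a .c
  /-- the arc from `w_l^δ` to `v_l^δ` -/
  | w_v (δ : Fin 3) (l : Fin n) : RAdj n m E (.wV δ l) (.vV δ l)
  /-- the arc from `t_l^δ` to `v_l^δ` -/
  | t_v (δ : Fin 3) (l : Fin n) : RAdj n m E (.tV δ l) (.vV δ l)
  /-- the arc from `δ_{s+1}` to its pendant out-neighbor -/
  | delta_pend (δ : Fin 3) (s : Fin 3) : RAdj n m E (.deltaV δ s) (.deltaPend δ s)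
  /-- the arcs from `a` to every vertex `v_l^δ` -/
  | a_v (δ : Fin 3) (l : Fin n) : RAdj n m E .a (.vV δ l)
  /-- the arcs of the directed path of length `lenA n (E e) δ s` from `u_i^e` to `δ_{s+1}` -/
  | pathA (i : Fin n) (e : Fin m) (δ s : Fin 3) (j : ℕ) (h : j < lenA n (E e) δ s) :
      RAdj n m E (pA i e δ s j) (pA i e δ s (j + 1))
  /-- the arcs of the directed path of length `lenB n s l` from `δ_{s+1}` to `w_l^δ` -/
  | pathB (δ s : Fin 3) (l : Fin n) (j : ℕ) (h : j < lenB n s l) :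
      RAdj n m E (pB δ s l j) (pB δ s l (j + 1))
  /-- the arcs of the directed path of length `λ²` from `δ_2` to `t_l^δ` -/
  | pathT (δ : Fin 3) (l : Fin n) (j : ℕ) (h : j < lamN n ^ 2) :
      RAdj n m E (pT δ l j) (pT δ l (j + 1))
  /-- the arc from the vertex immediately preceding `δ_{s+1}` on the path from
  `u_i^e` to `δ_{s+1}` to its pendant out-neighbor -/
  | pendA_arc (i : Fin n) (e : Fin m) (δ s : Fin 3) :
      RAdj n m E (pA i e δ s (lenA n (E e) δ s - 1)) (.pendA i e δ s)



section AcyclicRank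

open SimpleGraph

private lemma nodup_head_getLast {α : Type*} {l : List α} (h : l.Nodup)
    (he : l.head? = l.getLast?) : l.length ≤ 1 := by
  match l with
  | [] => simp
  | [a] => simp
  | a :: b :: t =>
    exfalso
    have h2 : (a :: b :: t).getLast? = some ((b :: t).getLast (by simp)) := by
      rw [List.getLast?_eq_getLast (by simp)]
      rw [List.getLast_cons (by simp)]
    rw [h2] at he
    have ha : a = (b :: t).getLast (by simp) := by simpa using he
    have hmem : (b :: t).getLast (by simp) ∈ b :: t := List.getLast_mem _
    rw [← ha] at hmem
    simp only [List.nodup_cons] at h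
    exact h.1 hmem

private lemma head_edge_eq {W : Type*} {G : SimpleGraph W} (r : W → ℕ) (f : W → W)
    (h : ∀ x y, G.Adj x y → (r x < r y ∧ f y = x) ∨ (r y < r x ∧ f x = y))
    {u : W} (c : G.Walk u u) (hc : c ≠ SimpleGraph.Walk.nil)
    (hmax : ∀ x ∈ c.support, r x ≤ r u) :
    c.edges.head? = some (Sym2.mk u (f u)) := by
  cases c with
  | nil => exact absurd rfl hc
  | cons hadj q =>
    rename_i w
    have hw : r w ≤ r u := hmax _ (by simp [SimpleGraph.Walk.support_cons,
      q.start_mem_support])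
    rcases h _ _ hadj with ⟨h1, _⟩ | ⟨_, h2⟩
    · omega
    · rw [h2]
      simp [SimpleGraph.Walk.edges_cons]

private lemma acyclic_of_rank {W : Type*} [DecidableEq W] (G : SimpleGraph W) (r : W → ℕ) (f : W → W)
    (h : ∀ x y, G.Adj x y → (r x < r y ∧ f y = x) ∨ (r y < r x ∧ f x = y)) :
    G.IsAcyclic := by
  intro v p hp
  obtain ⟨u, hu⟩ : ∃ u, u ∈ p.support.argmax r := by
    cases hh : p.support.argmax r with
    | none => exact absurd (List.argmax_eq_none.mp hh) p.support_ne_nil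
    | some u => exact ⟨u, Option.mem_def.mpr rfl⟩
  have humem : u ∈ p.support := List.argmax_mem hu
  have hmaxp : ∀ x ∈ p.support, r x ≤ r u := fun x hx => List.le_of_mem_argmax hx hu
  set c := p.rotate u humem with hcdef
  have hc : c.IsCycle := hp.rotate humem
  have hmax : ∀ x ∈ c.support, r x ≤ r u := by
    intro x hx
    rw [SimpleGraph.Walk.support_eq_cons, List.mem_cons] at hx
    rcases hx with rfl | hx
    · exact le_refl _
    · exact hmaxp x (List.mem_of_mem_tail
        (((SimpleGraph.Walk.support_rotate p u humem)).mem_iff.mp hx))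
  have hmaxr : ∀ x ∈ c.reverse.support, r x ≤ r u := by
    intro x hx
    apply hmax
    rwa [SimpleGraph.Walk.support_reverse, List.mem_reverse] at hx
  have h3 := hc.three_le_length
  have hne : c ≠ SimpleGraph.Walk.nil := by
    intro hnil; rw [hnil] at h3; simp at h3
  have hner : c.reverse ≠ SimpleGraph.Walk.nil := by
    intro hnil
    have h0 : c.reverse.length = 0 := by rw [hnil]; rfl
    rw [SimpleGraph.Walk.length_reverse] at h0
    omega
  have e1 := head_edge_eq r f h c hne hmax
  have e2 := head_edge_eq r f h c.reverse hner hmaxr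
  rw [SimpleGraph.Walk.edges_reverse, ← List.getLast?_eq_head?_reverse] at e2
  have hlen := nodup_head_getLast hc.edges_nodup (e1.trans e2.symm)
  rw [SimpleGraph.Walk.length_edges] at hlen
  omega

end AcyclicRank

section ConstructionLemmas

variable {n m : ℕ} {E : Fin m → Fin n × Fin n × Fin n}

/-- a size bound used as a "large rank" -/
def LL (n : ℕ) : ℕ := lamN n ^ 2 + n * lamN n + 1

lemma lamN_sq_bounds (n : ℕ) : 0 < lamN n ^ 2 ∧ lamN n ^ 2 < LL n := by
  constructor
  · unfold lamN; positivity
  · unfold LL; omega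

lemma lenA_bounds (t : Fin n × Fin n × Fin n) (δ s : Fin 3) :
    0 < lenA n t δ s ∧ lenA n t δ s < LL n := by
  have h1 : idx1 (tcomp t δ) ≤ n := (tcomp t δ).isLt
  have key : idx1 (tcomp t δ) * lamN n + lamN n ≤ lamN n ^ 2 := by
    have e1 : idx1 (tcomp t δ) * lamN n + lamN n = (idx1 (tcomp t δ) + 1) * lamN n := by ring
    have e2 : (idx1 (tcomp t δ) + 1) * lamN n ≤ (n + 1) * lamN n :=
      Nat.mul_le_mul_right _ (by omega)
    have e3 : (n + 1) * lamN n = lamN n ^ 2 := by unfold lamN; ring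
    omega
  have hpos : 0 < lamN n := by unfold lamN; omega
  have hnl : idx1 (tcomp t δ) * lamN n ≤ n * lamN n := Nat.mul_le_mul_right _ h1
  unfold lenA LL
  split_ifs <;> omega

lemma lenB_bounds (s : Fin 3) (l : Fin n) :
    0 < lenB n s l ∧ lenB n s l < LL n := by
  have h1 : idx1 l ≤ n := l.isLt
  have key : idx1 l * lamN n + lamN n ≤ lamN n ^ 2 := by
    have e1 : idx1 l * lamN n + lamN n = (idx1 l + 1) * lamN n := by ring
    have e2 : (idx1 l + 1) * lamN n ≤ (n + 1) * lamN n := Nat.mul_le_mul_right _ (by omega)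
    have e3 : (n + 1) * lamN n = lamN n ^ 2 := by unfold lamN; ring
    omega
  have hpos : 0 < lamN n := by unfold lamN; omega
  have hnl : idx1 l * lamN n ≤ n * lamN n := Nat.mul_le_mul_right _ h1
  unfold lenB LL
  split_ifs <;> omega

lemma pA_zero (i : Fin n) (e : Fin m) (δ s : Fin 3) :
    (pA i e δ s 0 : RV n m E) = .edgeV i e := rfl

lemma pA_pos (i : Fin n) (e : Fin m) (δ s : Fin 3) {j : ℕ} (h0 : j ≠ 0)
    (h : j < lenA n (E e) δ s) :
    (pA i e δ s j : RV n m E) = .innA i e δ s ⟨j - 1, by omega⟩ := by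
  rw [pA, dif_neg h0, dif_pos h]

lemma pA_top (i : Fin n) (e : Fin m) (δ s : Fin 3) {j : ℕ} (h0 : j ≠ 0)
    (h : ¬ j < lenA n (E e) δ s) :
    (pA i e δ s j : RV n m E) = .deltaV δ s := by
  rw [pA, dif_neg h0, dif_neg h]

lemma pB_zero (δ s : Fin 3) (l : Fin n) : (pB δ s l 0 : RV n m E) = .deltaV δ s := rfl

lemma pB_pos (δ s : Fin 3) (l : Fin n) {j : ℕ} (h0 : j ≠ 0) (h : j < lenB n s l) :
    (pB δ s l j : RV n m E) = .innB δ s l ⟨j - 1, by omega⟩ := by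
  rw [pB, dif_neg h0, dif_pos h]

lemma pB_top (δ s : Fin 3) (l : Fin n) {j : ℕ} (h0 : j ≠ 0) (h : ¬ j < lenB n s l) :
    (pB δ s l j : RV n m E) = .wV δ l := by
  rw [pB, dif_neg h0, dif_neg h]

lemma pT_zero (δ : Fin 3) (l : Fin n) : (pT δ l 0 : RV n m E) = .deltaV δ 1 := rfl

lemma pT_pos (δ : Fin 3) (l : Fin n) {j : ℕ} (h0 : j ≠ 0) (h : j < lamN n ^ 2) :
    (pT δ l j : RV n m E) = .innT δ l ⟨j - 1, by omega⟩ := by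
  rw [pT, dif_neg h0, dif_pos h]

lemma pT_top (δ : Fin 3) (l : Fin n) {j : ℕ} (h0 : j ≠ 0) (h : ¬ j < lamN n ^ 2) :
    (pT δ l j : RV n m E) = .tV δ l := by
  rw [pT, dif_neg h0, dif_neg h]

/-- a topological rank witnessing acyclicity of the digraph `D`. -/
def rho : RV n m E → ℕ
  | .a => 0
  | .edgeV _ _ => 1
  | .dV _ => 2
  | .b => 2
  | .c => 3
  | .vV _ _ => 2 * LL n + 2
  | .wV _ _ => 2 * LL n + 1
  | .tV _ _ => 2 * LL n + 1
  | .deltaV _ _ => LL n + 1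
  | .deltaPend _ _ => LL n + 2
  | .pendA _ e δ s => lenA n (E e) δ s + 1
  | .innA _ _ _ _ j => (j : ℕ) + 2
  | .innB _ _ _ j => LL n + (j : ℕ) + 2
  | .innT _ _ j => LL n + (j : ℕ) + 2

lemma rho_lt_of_adj {u v : RV n m E} (h : RAdj n m E u v) : rho u < rho v := by
  cases h with
  | edge_d i e => simp [rho]
  | a_edge i e => simp [rho]
  | edge_b i e => simp [rho]
  | d_c i => simp [rho]
  | a_c => simp [rho]
  | w_v δ l => simp [rho]
  | t_v δ l => simp [rho]
  | delta_pend δ s => simp [rho]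
  | a_v δ l => simp [rho]
  | pathA i e δ s j hj =>
    obtain ⟨hA1, hA2⟩ := lenA_bounds (E e) δ s
    by_cases h0 : j = 0
    · subst h0
      rw [pA_zero]
      by_cases h1 : 1 < lenA n (E e) δ s
      · rw [pA_pos i e δ s (by omega) h1]; simp [rho]
      · rw [pA_top i e δ s (by omega) h1]; simp [rho]; omega
    · rw [pA_pos i e δ s h0 hj]
      by_cases h1 : j + 1 < lenA n (E e) δ s
      · rw [pA_pos i e δ s (by omega) h1]; simp [rho]; omega
      · rw [pA_top i e δ s (by omega) h1]; simp [rho]; omega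
  | pathB δ s l j hj =>
    obtain ⟨hB1, hB2⟩ := lenB_bounds s l
    by_cases h0 : j = 0
    · subst h0
      rw [pB_zero]
      by_cases h1 : 1 < lenB n s l
      · rw [pB_pos δ s l (by omega) h1]; simp [rho]
      · rw [pB_top δ s l (by omega) h1]; simp [rho]; omega
    · rw [pB_pos δ s l h0 hj]
      by_cases h1 : j + 1 < lenB n s l
      · rw [pB_pos δ s l (by omega) h1]; simp [rho]; omega
      · rw [pB_top δ s l (by omega) h1]; simp [rho]; omega
  | pathT δ l j hj =>
    obtain ⟨hT1, hT2⟩ := lamN_sq_bounds n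
    by_cases h0 : j = 0
    · subst h0
      rw [pT_zero]
      by_cases h1 : 1 < lamN n ^ 2
      · rw [pT_pos δ l (by omega) h1]; simp [rho]
      · rw [pT_top δ l (by omega) h1]; simp [rho]; omega
    · rw [pT_pos δ l h0 hj]
      by_cases h1 : j + 1 < lamN n ^ 2
      · rw [pT_pos δ l (by omega) h1]; simp [rho]; omega
      · rw [pT_top δ l (by omega) h1]; simp [rho]; omega
  | pendA_arc i e δ s =>
    obtain ⟨hA1, hA2⟩ := lenA_bounds (E e) δ s
    by_cases h1 : lenA n (E e) δ s - 1 = 0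
    · rw [h1, pA_zero]; simp [rho]; omega
    · rw [pA_pos i e δ s h1 (by omega)]; simp [rho]; omega

lemma rho_lt_of_transGen {u v : RV n m E} (h : Relation.TransGen (RAdj n m E) u v) :
    rho u < rho v := by
  induction h with
  | single h => exact rho_lt_of_adj h
  | tail _ h ih => exact ih.trans (rho_lt_of_adj h)

end ConstructionLemmas

section ForestStructure

variable {n m : ℕ} {E : Fin m → Fin n × Fin n × Fin n}

/-- rank function for the forest obtained after deleting the twelve vertices. -/
def rk : RV n m E → ℕ
  | .edgeV _ _ => 1
  | .dV _ => 0
  | .a => 0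
  | .b => 0
  | .c => 0
  | .vV _ _ => 0
  | .wV _ _ => 1
  | .tV _ _ => 1
  | .deltaV _ _ => 0
  | .deltaPend _ _ => 0
  | .pendA _ e δ s => lenA n (E e) δ s + 1
  | .innA _ _ _ _ j => (j : ℕ) + 2
  | .innB _ s l j => lenB n s l - (j : ℕ)
  | .innT _ _ j => lamN n ^ 2 - (j : ℕ)

/-- parent function for the forest obtained after deleting the twelve vertices. -/
def par : RV n m E → RV n m E
  | .edgeV i _ => .dV i
  | .wV δ l => .vV δ l
  | .tV δ l => .vV δ l
  | .pendA i e δ s => pA i e δ s (lenA n (E e) δ s - 1)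
  | .innA i e δ s j => pA i e δ s (j : ℕ)
  | .innB δ s l j => pB δ s l ((j : ℕ) + 2)
  | .innT δ l j => pT δ l ((j : ℕ) + 2)
  | v => v

lemma pA_good (i : Fin n) (e : Fin m) (δ s : Fin 3) {j : ℕ} (h : j < lenA n (E e) δ s)
    {x : RV n m E} (hx : x = pA i e δ s j) :
    ¬ (x = .a ∨ x = .b ∨ x = .c ∨ ∃ δ' s', x = .deltaV δ' s') := by
  subst hx
  by_cases h0 : j = 0
  · subst h0; rw [pA_zero]; simp
  · rw [pA_pos i e δ s h0 h]; simp

lemma pB_good (δ s : Fin 3) (l : Fin n) {j : ℕ} (h0 : j ≠ 0)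
    {x : RV n m E} (hx : x = pB δ s l j) :
    ¬ (x = .a ∨ x = .b ∨ x = .c ∨ ∃ δ' s', x = .deltaV δ' s') := by
  subst hx
  by_cases h : j < lenB n s l
  · rw [pB_pos δ s l h0 h]; simp
  · rw [pB_top δ s l h0 h]; simp

lemma pT_good (δ : Fin 3) (l : Fin n) {j : ℕ} (h0 : j ≠ 0)
    {x : RV n m E} (hx : x = pT δ l j) :
    ¬ (x = .a ∨ x = .b ∨ x = .c ∨ ∃ δ' s', x = .deltaV δ' s') := by
  subst hx
  by_cases h : j < lamN n ^ 2
  · rw [pT_pos δ l h0 h]; simp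
  · rw [pT_top δ l h0 h]; simp

lemma par_good (v : RV n m E)
    (hv : ¬ (v = .a ∨ v = .b ∨ v = .c ∨ ∃ δ s, v = .deltaV δ s)) :
    ¬ (par v = .a ∨ par v = .b ∨ par v = .c ∨ ∃ δ s, par v = .deltaV δ s) := by
  cases v with
  | edgeV i e => simp [par]
  | wV δ l => simp [par]
  | tV δ l => simp [par]
  | pendA i e δ s =>
    have := (lenA_bounds (E e) δ s).1
    exact pA_good i e δ s (by omega) rfl
  | innA i e δ s j =>
    have hj := j.isLt
    exact pA_good i e δ s (by omega) rfl
  | innB δ s l j => exact pB_good δ s l (by omega) rfl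
  | innT δ l j => exact pT_good δ l (by omega) rfl
  | a => simp at hv
  | b => simp at hv
  | c => simp at hv
  | dV i => simp [par]
  | vV δ l => simp [par]
  | deltaV δ s => exact absurd (Or.inr (Or.inr (Or.inr ⟨δ, s, rfl⟩))) hv
  | deltaPend δ s => simp [par]

lemma edge_check (u v : RV n m E)
    (hu : ¬ (u = .a ∨ u = .b ∨ u = .c ∨ ∃ δ s, u = .deltaV δ s))
    (hv : ¬ (v = .a ∨ v = .b ∨ v = .c ∨ ∃ δ s, v = .deltaV δ s))
    (h : RAdj n m E u v) :
    (rk u < rk v ∧ par v = u) ∨ (rk v < rk u ∧ par u = v) := by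
  cases h with
  | edge_d i e => exact Or.inr ⟨by simp [rk], rfl⟩
  | a_edge i e => exact absurd (Or.inl rfl) hu
  | edge_b i e => exact absurd (Or.inr (Or.inl rfl)) hv
  | d_c i => exact absurd (Or.inr (Or.inr (Or.inl rfl))) hv
  | a_c => exact absurd (Or.inl rfl) hu
  | w_v δ l => exact Or.inr ⟨by simp [rk], rfl⟩
  | t_v δ l => exact Or.inr ⟨by simp [rk], rfl⟩
  | delta_pend δ s => exact absurd (Or.inr (Or.inr (Or.inr ⟨δ, s, rfl⟩))) hu
  | a_v δ l => exact absurd (Or.inl rfl) hu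
  | pathA i e δ s j hj =>
    obtain ⟨hA1, hA2⟩ := lenA_bounds (E e) δ s
    by_cases h1 : j + 1 < lenA n (E e) δ s
    · rw [pA_pos i e δ s (by omega) h1]
      by_cases h0 : j = 0
      · subst h0
        rw [pA_zero]
        refine Or.inl ⟨by simp only [rk, Fin.val_mk]; omega, ?_⟩
        simp only [par, Fin.val_mk, Nat.add_sub_cancel]
        exact pA_zero i e δ s
      · rw [pA_pos i e δ s h0 hj]
        refine Or.inl ⟨by simp only [rk, Fin.val_mk]; omega, ?_⟩
        simp only [par, Fin.val_mk, Nat.add_sub_cancel]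
        exact pA_pos i e δ s h0 hj
    · rw [pA_top i e δ s (by omega) h1] at hv
      exact absurd (Or.inr (Or.inr (Or.inr ⟨δ, s, rfl⟩))) hv
  | pathB δ s l j hj =>
    obtain ⟨hB1, hB2⟩ := lenB_bounds s l
    by_cases h0 : j = 0
    · rw [h0, pB_zero] at hu
      exact absurd (Or.inr (Or.inr (Or.inr ⟨δ, s, rfl⟩))) hu
    · rw [pB_pos δ s l h0 hj]
      by_cases h1 : j + 1 < lenB n s l
      · rw [pB_pos δ s l (by omega) h1]
        refine Or.inr ⟨by simp only [rk, Fin.val_mk]; omega, ?_⟩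
        simp only [par, Fin.val_mk]
        rw [show j - 1 + 2 = j + 1 from by omega]
        exact pB_pos δ s l (by omega) h1
      · rw [pB_top δ s l (by omega) h1]
        refine Or.inr ⟨by simp only [rk, Fin.val_mk]; omega, ?_⟩
        simp only [par, Fin.val_mk]
        rw [show j - 1 + 2 = j + 1 from by omega]
        exact pB_top δ s l (by omega) h1
  | pathT δ l j hj =>
    obtain ⟨hT1, hT2⟩ := lamN_sq_bounds n
    by_cases h0 : j = 0
    · rw [h0, pT_zero] at hu
      exact absurd (Or.inr (Or.inr (Or.inr ⟨δ, 1, rfl⟩))) hu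
    · rw [pT_pos δ l h0 hj]
      by_cases h1 : j + 1 < lamN n ^ 2
      · rw [pT_pos δ l (by omega) h1]
        refine Or.inr ⟨by simp only [rk, Fin.val_mk]; omega, ?_⟩
        simp only [par, Fin.val_mk]
        rw [show j - 1 + 2 = j + 1 from by omega]
        exact pT_pos δ l (by omega) h1
      · rw [pT_top δ l (by omega) h1]
        refine Or.inr ⟨by simp only [rk, Fin.val_mk]; omega, ?_⟩
        simp only [par, Fin.val_mk]
        rw [show j - 1 + 2 = j + 1 from by omega]
        exact pT_top δ l (by omega) h1
  | pendA_arc i e δ s =>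
    obtain ⟨hA1, hA2⟩ := lenA_bounds (E e) δ s
    refine Or.inl ⟨?_, by simp [par]⟩
    by_cases h1 : lenA n (E e) δ s - 1 = 0
    · rw [h1, pA_zero]; simp only [rk]; omega
    · rw [pA_pos i e δ s h1 (by omega)]
      simp only [rk, Fin.val_mk]; omega

end ForestStructure


/-- The digraph `D` constructed from any 3-Dimensional
Matching instance is a DAG, and deleting the twelve vertices `α_1, α_2, α_3,
β_1, β_2, β_3, γ_1, γ_2, γ_3, a, b, c` from its underlying undirected graph
leaves an acyclic graph; consequently the underlying undirected graph of `D`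
has feedback vertex set number at most 12. -/
theorem construction_is_dag_and_fvn_le_twelve (n m : ℕ)
    (E : Fin m → Fin n × Fin n × Fin n) (hE : Function.Injective E) :
    (∀ v : RV n m E, ¬ Relation.TransGen (RAdj n m E) v v) ∧
    ((underlying (RAdj n m E)).induce
      {v : RV n m E | ¬ (v = .a ∨ v = .b ∨ v = .c ∨
        ∃ δ s : Fin 3, v = .deltaV δ s)}).IsAcyclic ∧
    fvn (underlying (RAdj n m E)) ≤ 12 := by
  classical
  have hac : ((underlying (RAdj n m E)).induce
      {v : RV n m E | ¬ (v = .a ∨ v = .b ∨ v = .c ∨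
        ∃ δ s : Fin 3, v = .deltaV δ s)}).IsAcyclic := by
    apply acyclic_of_rank _ (fun x => rk x.val)
      (fun x => ⟨par x.val, par_good x.val x.2⟩)
    rintro ⟨x, hx⟩ ⟨y, hy⟩ hxy
    have hxy' : (underlying (RAdj n m E)).Adj x y := hxy
    rcases hxy' with ⟨hne, hD | hD⟩
    · rcases edge_check x y hx hy hD with ⟨h1, h2⟩ | ⟨h1, h2⟩
      · exact Or.inl ⟨h1, Subtype.ext h2⟩
      · exact Or.inr ⟨h1, Subtype.ext h2⟩
    · rcases edge_check y x hy hx hD with ⟨h1, h2⟩ | ⟨h1, h2⟩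
      · exact Or.inr ⟨h1, Subtype.ext h2⟩
      · exact Or.inl ⟨h1, Subtype.ext h2⟩
  refine ⟨?_, hac, ?_⟩
  · intro v hv
    exact absurd (rho_lt_of_transGen hv) (lt_irrefl _)
  · -- fvn ≤ 12
    have hinj : Function.Injective
        (fun p : Fin 3 × Fin 3 => (RV.deltaV p.1 p.2 : RV n m E)) := by
      rintro ⟨a, b⟩ ⟨c, d⟩ hcd
      simp only [RV.deltaV.injEq] at hcd
      exact Prod.ext hcd.1 hcd.2
    have h9 : (Set.range
        (fun p : Fin 3 × Fin 3 => (RV.deltaV p.1 p.2 : RV n m E))).ncard = 9 := by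
      rw [← Set.image_univ, Set.ncard_image_of_injective _ hinj, Set.ncard_univ]
      simp [Nat.card_eq_fintype_card]
    have hfin : (Set.range
        (fun p : Fin 3 × Fin 3 => (RV.deltaV p.1 p.2 : RV n m E))).Finite :=
      Set.finite_range _
    have hWeq : {v : RV n m E | v = .a ∨ v = .b ∨ v = .c ∨
        ∃ δ s : Fin 3, v = .deltaV δ s} =
        insert RV.a (insert RV.b (insert RV.c (Set.range
          (fun p : Fin 3 × Fin 3 => (RV.deltaV p.1 p.2 : RV n m E))))) := by
      ext v
      simp only [Set.mem_setOf_eq, Set.mem_insert_iff, Set.mem_range, Prod.exists]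
      constructor
      · rintro (rfl | rfl | rfl | ⟨δ, s, rfl⟩)
        · exact Or.inl rfl
        · exact Or.inr (Or.inl rfl)
        · exact Or.inr (Or.inr (Or.inl rfl))
        · exact Or.inr (Or.inr (Or.inr ⟨δ, s, rfl⟩))
      · rintro (rfl | rfl | rfl | ⟨δ, s, rfl⟩)
        · exact Or.inl rfl
        · exact Or.inr (Or.inl rfl)
        · exact Or.inr (Or.inr (Or.inl rfl))
        · exact Or.inr (Or.inr (Or.inr ⟨δ, s, rfl⟩))
    have h12 : ({v : RV n m E | v = .a ∨ v = .b ∨ v = .c ∨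
        ∃ δ s : Fin 3, v = .deltaV δ s}).ncard = 12 := by
      rw [hWeq,
        Set.ncard_insert_of_notMem (by simp) ((hfin.insert _).insert _),
        Set.ncard_insert_of_notMem (by simp) (hfin.insert _),
        Set.ncard_insert_of_notMem (by simp) hfin, h9]
    exact Nat.sInf_le ⟨{v : RV n m E | v = .a ∨ v = .b ∨ v = .c ∨
      ∃ δ s : Fin 3, v = .deltaV δ s}, h12, hac⟩



end GeoPaper
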